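/- For the linear operator channel Y = XH with X a random T×M matrix independent of the random M×N matrix H, the capacity with channel information at the receiver, max_{p_X} I(X; (Y,H)), equals E[rank(H)]·T·log₂ q. -/

import Mathlib

/- Capacity with channel information at the receiver: for the linear operator channel
`Y = XH` with `X` independent of the random matrix `H` (distribution `pH`), the maximum
over input distributions of `I(X; (Y,H))` (in bits) equals `E[rank(H)] · T · log₂ q`,
and the maximum is achieved. -/

open Finset Real

lemma aux_ent_le {ι : Type*} [Fintype ι] (s : ι → ℝ) (A : Finset ι)
    (h0 : ∀ y, 0 ≤ s y) (h1 : ∑ y, s y = 1) (hsupp : ∀ y, s y ≠ 0 → y ∈ A) :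
    ∑ y, Real.negMulLog (s y) ≤ Real.log A.card := by
  have hA : A.Nonempty := by
    rcases Finset.eq_empty_or_nonempty A with hA | hA
    · exfalso
      have hz : ∀ y, s y = 0 := fun y => by
        by_contra hy; exact absurd (hsupp y hy) (by simp [hA])
      simp [hz] at h1
    · exact hA
  have hc : (0:ℝ) < (A.card : ℝ) := by exact_mod_cast Finset.card_pos.mpr hA
  have hout : ∀ y ∈ Finset.univ, y ∉ A → s y = 0 := fun y _ hy => by
    by_contra hsy; exact hy (hsupp y hsy)
  have hsumA : ∑ y ∈ A, s y = 1 := by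
    rw [← h1]
    exact Finset.sum_subset (Finset.subset_univ A) hout
  have hEA : ∑ y, Real.negMulLog (s y) = ∑ y ∈ A, Real.negMulLog (s y) :=
    (Finset.sum_subset (Finset.subset_univ A) (fun y hy hyA => by
      rw [hout y hy hyA, Real.negMulLog_zero])).symm
  have jensen := Real.concaveOn_negMulLog.le_map_sum
    (t := A) (w := fun _ => ((A.card : ℝ))⁻¹) (p := s)
    (fun i _ => by positivity)
    (by rw [Finset.sum_const, nsmul_eq_mul, mul_inv_cancel₀ hc.ne'])
    (fun i _ => h0 i)
  have hr : ∑ i ∈ A, ((A.card : ℝ))⁻¹ • s i = ((A.card : ℝ))⁻¹ := by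
    simp only [smul_eq_mul, ← Finset.mul_sum, hsumA, mul_one]
  rw [hr] at jensen
  have hnml : Real.negMulLog ((A.card : ℝ))⁻¹ = ((A.card : ℝ))⁻¹ * Real.log A.card := by
    rw [Real.negMulLog, Real.log_inv]; ring
  rw [hnml] at jensen
  have hlhs : ∑ i ∈ A, ((A.card : ℝ))⁻¹ • Real.negMulLog (s i)
      = ((A.card : ℝ))⁻¹ * ∑ i ∈ A, Real.negMulLog (s i) := by
    simp [smul_eq_mul, Finset.mul_sum]
  rw [hlhs] at jensen
  rw [hEA]
  exact le_of_mul_le_mul_left (by simpa [smul_eq_mul, Finset.mul_sum] using jensen) (inv_pos.mpr hc)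

open Classical in
lemma aux_row_mul {F : Type*} [Field F] [Fintype F] {T M N : ℕ}
    (x : Matrix (Fin T) (Fin M) F) (h : Matrix (Fin M) (Fin N) F) (i : Fin T) :
    (x * h) i = Matrix.vecMul (x i) h := by
  funext j
  simp [Matrix.mul_apply, Matrix.vecMul, dotProduct]

open Classical in
lemma aux_card_image {F : Type*} [Field F] [Fintype F] [DecidableEq F] (T M N : ℕ)
    (h : Matrix (Fin M) (Fin N) F) :
    (Finset.image (fun x : Matrix (Fin T) (Fin M) F => x * h) Finset.univ).card
      = Fintype.card F ^ (T * h.rank) := by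
  set W : Submodule F (Fin N → F) := LinearMap.range h.vecMulLinear with hW
  have hfr : Module.finrank F W = h.rank := by
    rw [hW, ← Matrix.rank_transpose h, Matrix.rank, Matrix.mulVecLin_transpose]
  have hcardW : Fintype.card W = Fintype.card F ^ h.rank := by
    rw [Module.card_eq_pow_finrank (K := F) (V := W), hfr]
  have hmem : ∀ Y : Matrix (Fin T) (Fin N) F,
      (Y ∈ Finset.image (fun x : Matrix (Fin T) (Fin M) F => x * h) Finset.univ)
        ↔ ∀ i, Y i ∈ W := by
    intro Y
    simp only [Finset.mem_image, Finset.mem_univ, true_and]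
    constructor
    · rintro ⟨x, rfl⟩ i
      exact ⟨x i, by rw [Matrix.vecMulLinear_apply, ← aux_row_mul]⟩
    · intro hY
      choose v hv using hY
      refine ⟨Matrix.of v, ?_⟩
      funext i j
      rw [aux_row_mul]
      have := hv i
      rw [Matrix.vecMulLinear_apply] at this
      rw [show (Matrix.of v) i = v i from rfl, this]
  have e : {Y : Matrix (Fin T) (Fin N) F // ∀ i, Y i ∈ W} ≃ (Fin T → W) :=
    { toFun := fun Y i => ⟨Y.1 i, Y.2 i⟩
      invFun := fun f => ⟨fun i => (f i).1, fun i => (f i).2⟩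
      left_inv := fun Y => rfl
      right_inv := fun f => rfl }
  calc (Finset.image (fun x : Matrix (Fin T) (Fin M) F => x * h) Finset.univ).card
      = Fintype.card {Y : Matrix (Fin T) (Fin N) F // ∀ i, Y i ∈ W} := by
        rw [← Fintype.card_coe]
        exact Fintype.card_congr (Equiv.subtypeEquivRight hmem)
    _ = Fintype.card (Fin T → W) := Fintype.card_congr e
    _ = Fintype.card W ^ T := by rw [Fintype.card_fun, Fintype.card_fin]
    _ = Fintype.card F ^ (T * h.rank) := by rw [hcardW, ← pow_mul, Nat.mul_comm]

open Classical in
lemma aux_fiber_card {F : Type*} [Field F] [Fintype F] [DecidableEq F] {T M N : ℕ}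
    (h : Matrix (Fin M) (Fin N) F) (y : Matrix (Fin T) (Fin N) F)
    (x0 : Matrix (Fin T) (Fin M) F) (hx0 : x0 * h = y) :
    (Finset.univ.filter fun x : Matrix (Fin T) (Fin M) F => x * h = y).card
      = (Finset.univ.filter fun x : Matrix (Fin T) (Fin M) F => x * h = 0).card := by
  apply Finset.card_nbij' (i := fun x => x - x0) (j := fun z => z + x0)
  · intro x hx
    simp only [Finset.mem_coe, Finset.mem_filter, Finset.mem_univ, true_and] at hx ⊢
    rw [Matrix.sub_mul, hx, hx0, sub_self]
  · intro z hz
    simp only [Finset.mem_coe, Finset.mem_filter, Finset.mem_univ, true_and] at hz ⊢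
    rw [Matrix.add_mul, hz, hx0, zero_add]
  · intro x _; simp
  · intro z _; simp

open Classical in
lemma aux_reduce {F : Type*} [Field F] [Fintype F] [DecidableEq F] {T M N : ℕ}
    (pH : Matrix (Fin M) (Fin N) F → ℝ)
    (p : Matrix (Fin T) (Fin M) F → ℝ) :
    (∑ x : Matrix (Fin T) (Fin M) F, ∑ y : Matrix (Fin T) (Fin N) F,
        ∑ h : Matrix (Fin M) (Fin N) F,
      (p x * pH h * (if y = x * h then 1 else 0)) *
        Real.logb 2 ((p x * pH h * (if y = x * h then 1 else 0)) /
          (p x * ∑ x' : Matrix (Fin T) (Fin M) F,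
            p x' * pH h * (if y = x' * h then 1 else 0))))
    = ∑ h : Matrix (Fin M) (Fin N) F, pH h *
        ((∑ y : Matrix (Fin T) (Fin N) F,
          Real.negMulLog (∑ x' ∈ Finset.univ.filter
            (fun x' : Matrix (Fin T) (Fin M) F => x' * h = y), p x')) / Real.log 2) := by
  rw [show (∑ x : Matrix (Fin T) (Fin M) F, ∑ y : Matrix (Fin T) (Fin N) F,
        ∑ h : Matrix (Fin M) (Fin N) F,
      (p x * pH h * (if y = x * h then 1 else 0)) *
        Real.logb 2 ((p x * pH h * (if y = x * h then 1 else 0)) /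
          (p x * ∑ x' : Matrix (Fin T) (Fin M) F,
            p x' * pH h * (if y = x' * h then 1 else 0))))
      = ∑ h : Matrix (Fin M) (Fin N) F, ∑ x : Matrix (Fin T) (Fin M) F,
          ∑ y : Matrix (Fin T) (Fin N) F,
        (p x * pH h * (if y = x * h then 1 else 0)) *
          Real.logb 2 ((p x * pH h * (if y = x * h then 1 else 0)) /
            (p x * ∑ x' : Matrix (Fin T) (Fin M) F,
              p x' * pH h * (if y = x' * h then 1 else 0)))
    from (Finset.sum_congr rfl fun x _ => Finset.sum_comm).trans Finset.sum_comm]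
  refine Finset.sum_congr rfl fun h _ => ?_
  set s : Matrix (Fin T) (Fin N) F → ℝ := fun y =>
    ∑ x' ∈ Finset.univ.filter (fun x' : Matrix (Fin T) (Fin M) F => x' * h = y), p x'
    with hs
  by_cases hh : pH h = 0
  · simp [hh]
  · have step1 : ∀ x : Matrix (Fin T) (Fin M) F,
        (∑ y : Matrix (Fin T) (Fin N) F,
          (p x * pH h * (if y = x * h then 1 else 0)) *
            Real.logb 2 ((p x * pH h * (if y = x * h then 1 else 0)) /
              (p x * ∑ x' : Matrix (Fin T) (Fin M) F,
                p x' * pH h * (if y = x' * h then 1 else 0))))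
        = p x * pH h * (-Real.log (s (x * h)) / Real.log 2) := by
      intro x
      rw [Finset.sum_eq_single (x * h)]
      · rw [if_pos rfl, mul_one]
        have hden : (∑ x' : Matrix (Fin T) (Fin M) F,
            p x' * pH h * (if x * h = x' * h then 1 else 0)) = pH h * s (x * h) := by
          simp only [hs]
          rw [Finset.sum_filter, Finset.mul_sum]
          refine Finset.sum_congr rfl fun x' _ => ?_
          by_cases hx' : x' * h = x * h
          · rw [if_pos hx'.symm, if_pos hx']; ring
          · rw [if_neg (fun hc => hx' hc.symm), if_neg hx']; ring
        rw [hden]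
        by_cases hx : p x = 0
        · simp [hx]
        · have harg : p x * pH h / (p x * (pH h * s (x * h))) = (s (x * h))⁻¹ := by
            rw [show p x * (pH h * s (x * h)) = p x * pH h * s (x * h) by ring,
              div_mul_eq_div_div, div_self (mul_ne_zero hx hh), one_div]
          rw [harg, Real.logb, Real.log_inv]
      · intro y _ hy
        rw [if_neg hy, mul_zero, zero_mul]
      · intro hx; exact absurd (Finset.mem_univ _) hx
    calc (∑ x : Matrix (Fin T) (Fin M) F, ∑ y : Matrix (Fin T) (Fin N) F,
            (p x * pH h * (if y = x * h then 1 else 0)) *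
              Real.logb 2 ((p x * pH h * (if y = x * h then 1 else 0)) /
                (p x * ∑ x' : Matrix (Fin T) (Fin M) F,
                  p x' * pH h * (if y = x' * h then 1 else 0))))
        = ∑ x : Matrix (Fin T) (Fin M) F,
            p x * pH h * (-Real.log (s (x * h)) / Real.log 2) :=
          Finset.sum_congr rfl fun x _ => step1 x
      _ = (pH h / Real.log 2) * ∑ x : Matrix (Fin T) (Fin M) F,
            p x * (-Real.log (s (x * h))) := by
          rw [Finset.mul_sum]; exact Finset.sum_congr rfl fun x _ => by ring
      _ = (pH h / Real.log 2) * ∑ y : Matrix (Fin T) (Fin N) F, Real.negMulLog (s y) := by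
          congr 1
          rw [← Finset.sum_fiberwise_of_maps_to
            (g := fun x : Matrix (Fin T) (Fin M) F => x * h)
            (t := (Finset.univ : Finset (Matrix (Fin T) (Fin N) F)))
            (fun x _ => Finset.mem_univ _)
            (f := fun x => p x * (-Real.log (s (x * h))))]
          refine Finset.sum_congr rfl fun y _ => ?_
          have hfib : ∀ x ∈ Finset.univ.filter
              (fun x : Matrix (Fin T) (Fin M) F => x * h = y),
              p x * (-Real.log (s (x * h))) = p x * (-Real.log (s y)) := by
            intro x hx
            rw [(Finset.mem_filter.mp hx).2]
          rw [Finset.sum_congr rfl hfib, ← Finset.sum_mul]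
          have hsy : (∑ i ∈ Finset.univ.filter
              (fun x : Matrix (Fin T) (Fin M) F => x * h = y), p i) = s y := rfl
          rw [hsy, Real.negMulLog]
          ring
      _ = pH h * ((∑ y : Matrix (Fin T) (Fin N) F, Real.negMulLog (s y)) / Real.log 2) := by
          ring

open Classical in
lemma aux_rhs {F : Type*} [Field F] [Fintype F] [DecidableEq F] (q T M N : ℕ)
    (hq : Fintype.card F = q) (pH : Matrix (Fin M) (Fin N) F → ℝ) :
    ∑ h : Matrix (Fin M) (Fin N) F, pH h *
        (Real.log ((Finset.image (fun x : Matrix (Fin T) (Fin M) F => x * h)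
          Finset.univ).card) / Real.log 2)
      = (∑ h : Matrix (Fin M) (Fin N) F, pH h * h.rank) * T * Real.logb 2 q := by
  rw [Finset.sum_mul, Finset.sum_mul]
  refine Finset.sum_congr rfl fun h _ => ?_
  rw [aux_card_image T M N h, hq, Real.logb]
  push_cast [Real.log_pow]
  ring
open Classical in
lemma aux_unif {F : Type*} [Field F] [Fintype F] [DecidableEq F] {T M N : ℕ}
    (h : Matrix (Fin M) (Fin N) F) :
    ∑ y : Matrix (Fin T) (Fin N) F, Real.negMulLog (∑ x' ∈ Finset.univ.filter
        (fun x' : Matrix (Fin T) (Fin M) F => x' * h = y),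
        ((Fintype.card (Matrix (Fin T) (Fin M) F) : ℝ))⁻¹)
      = Real.log ((Finset.image (fun x : Matrix (Fin T) (Fin M) F => x * h)
          Finset.univ).card) := by
  set A := Finset.image (fun x : Matrix (Fin T) (Fin M) F => x * h) Finset.univ with hA
  set n := A.card with hn
  set k := (Finset.univ.filter fun x : Matrix (Fin T) (Fin M) F => x * h = 0).card with hk
  have hQ : Fintype.card (Matrix (Fin T) (Fin M) F)
      = ∑ y ∈ A, (Finset.univ.filter
        (fun x : Matrix (Fin T) (Fin M) F => x * h = y)).card := by
    rw [← Finset.card_univ]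
    exact Finset.card_eq_sum_card_fiberwise fun x _ => Finset.mem_image_of_mem _ (Finset.mem_univ x)
  have hfib : ∀ y ∈ A, (Finset.univ.filter
      (fun x : Matrix (Fin T) (Fin M) F => x * h = y)).card = k := by
    intro y hy
    obtain ⟨x0, _, hx0⟩ := Finset.mem_image.mp hy
    exact aux_fiber_card h y x0 hx0
  have hQ2 : Fintype.card (Matrix (Fin T) (Fin M) F) = n * k := by
    rw [hQ, Finset.sum_congr rfl hfib, Finset.sum_const, smul_eq_mul]
  have hkpos : 0 < k := Finset.card_pos.mpr ⟨0, by
    simp only [Finset.mem_filter, Finset.mem_univ, true_and, Matrix.zero_mul]⟩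
  have hnpos : 0 < n := Finset.card_pos.mpr (Finset.univ_nonempty.image _)
  have hsy : ∀ y ∈ A, (∑ x' ∈ Finset.univ.filter
      (fun x' : Matrix (Fin T) (Fin M) F => x' * h = y),
      ((Fintype.card (Matrix (Fin T) (Fin M) F) : ℝ))⁻¹) = ((n : ℝ))⁻¹ := by
    intro y hy
    rw [Finset.sum_const, hfib y hy, nsmul_eq_mul, hQ2]
    have hk0 : ((k : ℝ)) ≠ 0 := Nat.cast_ne_zero.mpr hkpos.ne'
    have hn0 : ((n : ℝ)) ≠ 0 := Nat.cast_ne_zero.mpr hnpos.ne'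
    push_cast
    field_simp
  have houter : ∀ y ∈ Finset.univ, y ∉ A → Real.negMulLog (∑ x' ∈ Finset.univ.filter
      (fun x' : Matrix (Fin T) (Fin M) F => x' * h = y),
      ((Fintype.card (Matrix (Fin T) (Fin M) F) : ℝ))⁻¹) = 0 := by
    intro y _ hy
    have : (Finset.univ.filter (fun x' : Matrix (Fin T) (Fin M) F => x' * h = y)) = ∅ := by
      refine Finset.filter_eq_empty_iff.mpr fun x _ => fun hx =>
        hy (Finset.mem_image.mpr ⟨x, Finset.mem_univ _, hx⟩)
    rw [this, Finset.sum_empty, Real.negMulLog_zero]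
  rw [← Finset.sum_subset (Finset.subset_univ A) houter]
  have hn0 : ((n : ℝ)) ≠ 0 := Nat.cast_ne_zero.mpr hnpos.ne'
  calc ∑ y ∈ A, Real.negMulLog (∑ x' ∈ Finset.univ.filter
        (fun x' : Matrix (Fin T) (Fin M) F => x' * h = y),
        ((Fintype.card (Matrix (Fin T) (Fin M) F) : ℝ))⁻¹)
      = ∑ y ∈ A, Real.negMulLog ((n : ℝ))⁻¹ :=
        Finset.sum_congr rfl fun y hy => by rw [hsy y hy]
    _ = (n : ℝ) * Real.negMulLog ((n : ℝ))⁻¹ := by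
        rw [Finset.sum_const, nsmul_eq_mul, hn]
    _ = Real.log n := by
        rw [Real.negMulLog, Real.log_inv]
        field_simp

open Classical in
theorem stmt14 {F : Type*} [Field F] [Fintype F] [DecidableEq F] (q T M N : ℕ)
    (hq : Fintype.card F = q)
    (pH : Matrix (Fin M) (Fin N) F → ℝ) (hH0 : ∀ h, 0 ≤ pH h) (hH1 : ∑ h, pH h = 1) :
    IsGreatest
      {I : ℝ | ∃ p : Matrix (Fin T) (Fin M) F → ℝ,
        (∀ x, 0 ≤ p x) ∧ (∑ x, p x = 1) ∧
        I = ∑ x : Matrix (Fin T) (Fin M) F, ∑ y : Matrix (Fin T) (Fin N) F,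
              ∑ h : Matrix (Fin M) (Fin N) F,
            (p x * pH h * (if y = x * h then 1 else 0)) *
              Real.logb 2 ((p x * pH h * (if y = x * h then 1 else 0)) /
                (p x * ∑ x' : Matrix (Fin T) (Fin M) F,
                  p x' * pH h * (if y = x' * h then 1 else 0)))}
      ((∑ h : Matrix (Fin M) (Fin N) F, pH h * h.rank) * T * Real.logb 2 q) := by
  constructor
  · refine ⟨fun _ => ((Fintype.card (Matrix (Fin T) (Fin M) F) : ℝ))⁻¹,
      fun _ => by positivity, ?_, ?_⟩
    · rw [Finset.sum_const, Finset.card_univ, nsmul_eq_mul, mul_inv_cancel₀]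
      exact Nat.cast_ne_zero.mpr Fintype.card_ne_zero
    · rw [aux_reduce, ← aux_rhs q T M N hq pH]
      refine Finset.sum_congr rfl fun h _ => ?_
      rw [aux_unif h]
  · rintro I ⟨p, hp0, hp1, rfl⟩
    rw [aux_reduce, ← aux_rhs q T M N hq pH]
    refine Finset.sum_le_sum fun h _ => ?_
    refine mul_le_mul_of_nonneg_left ?_ (hH0 h)
    have h2 : (0:ℝ) < Real.log 2 := Real.log_pos (by norm_num)
    have hent : (∑ y : Matrix (Fin T) (Fin N) F,
        Real.negMulLog (∑ x' ∈ Finset.univ.filter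
          (fun x' : Matrix (Fin T) (Fin M) F => x' * h = y), p x'))
        ≤ Real.log ((Finset.image (fun x : Matrix (Fin T) (Fin M) F => x * h)
            Finset.univ).card) := by
      refine aux_ent_le _ _ (fun y => Finset.sum_nonneg fun x _ => hp0 x) ?_ ?_
      · rw [Finset.sum_fiberwise_of_maps_to (fun x _ => Finset.mem_univ _) p]
        exact hp1
      · intro y hy
        obtain ⟨x, hx, _⟩ := Finset.exists_ne_zero_of_sum_ne_zero hy
        exact Finset.mem_image.mpr ⟨x, Finset.mem_univ _, (Finset.mem_filter.mp hx).2⟩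
    exact by gcongr
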